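/- arXiv:0706.1763 — 6 statements merged into one kernel-verified Lean document; each statement's English description precedes it below -/
import Mathlib

section
/- For every positive integer u, the sum over factorizations u = d·e of μ(d)(log d)(log e) equals (log u)Λ(u) − Λ₂(u). -/
open ArithmeticFunction

/-- The second generalized von Mangoldt function `Λ₂ = μ * log²`. -/
noncomputable def Lambda2 (n : ℕ) : ℝ :=
  ∑ d ∈ n.divisors, (moebius d : ℝ) * (Real.log ((n / d : ℕ) : ℝ)) ^ 2

theorem sum_moebius_log_mul_log (u : ℕ) (hu : 0 < u) :
    ∑ p ∈ u.divisorsAntidiagonal, (moebius p.1 : ℝ) * Real.log p.1 * Real.log p.2 =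
      Real.log u * vonMangoldt u - Lambda2 u := by
  have h1 : (vonMangoldt u : ℝ) =
      ∑ p ∈ u.divisorsAntidiagonal, (moebius p.1 : ℝ) * Real.log p.2 := by
    rw [← moebius_mul_log_eq_vonMangoldt, mul_apply]
    simp [log_apply]
  have h2 : Lambda2 u =
      ∑ p ∈ u.divisorsAntidiagonal, (moebius p.1 : ℝ) * (Real.log p.2) ^ 2 := by
    rw [Lambda2, ← Nat.sum_divisorsAntidiagonal (fun d e => (moebius d : ℝ) * (Real.log e) ^ 2)]
  rw [h1, h2, Finset.mul_sum, ← Finset.sum_sub_distrib]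
  apply Finset.sum_congr rfl
  intro p hp
  obtain ⟨hmul, hn⟩ := Nat.mem_divisorsAntidiagonal.mp hp
  have hp1 : p.1 ≠ 0 := by rintro h; rw [h] at hmul; simp at hmul; omega
  have hp2 : p.2 ≠ 0 := by rintro h; rw [h] at hmul; simp at hmul; omega
  have hl : Real.log p.1 = Real.log u - Real.log p.2 := by
    rw [← hmul, Nat.cast_mul, Real.log_mul (by exact_mod_cast hp1) (by exact_mod_cast hp2)]
    ring
  rw [hl]; ring
end

section
/- For every positive integer u, Λ₂(u) = Λ(u)·log(u) + (Λ * Λ)(u), where Λ * Λ denotes Dirichlet convolution. -/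
open ArithmeticFunction
open scoped ArithmeticFunction.zeta

lemma key_conv : (vonMangoldt.pmul ArithmeticFunction.log + vonMangoldt * vonMangoldt) *
    (ζ : ArithmeticFunction ℝ) = ArithmeticFunction.log.pmul ArithmeticFunction.log := by
  rw [add_mul, mul_assoc, vonMangoldt_mul_zeta]
  ext n
  rcases Nat.eq_zero_or_pos n with rfl | hn
  · simp
  rw [ArithmeticFunction.add_apply, coe_mul_zeta_apply, mul_apply, pmul_apply, log_apply]
  simp only [pmul_apply, log_apply]
  rw [← Nat.sum_divisorsAntidiagonal (fun d e => vonMangoldt d * Real.log d),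
    ← Finset.sum_add_distrib]
  have : ∀ p ∈ n.divisorsAntidiagonal,
      vonMangoldt p.1 * Real.log p.1 + vonMangoldt p.1 * Real.log p.2
        = vonMangoldt p.1 * Real.log n := by
    intro p hp
    rw [Nat.mem_divisorsAntidiagonal] at hp
    have h1 : p.1 ≠ 0 := by rintro h; simp [h] at hp; omega
    have h2 : p.2 ≠ 0 := by rintro h; simp [h] at hp; omega
    rw [← mul_add, ← Real.log_mul (by exact_mod_cast h1) (by exact_mod_cast h2)]
    norm_cast
    rw [hp.1]
  rw [Finset.sum_congr rfl this, ← Finset.sum_mul,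
    Nat.sum_divisorsAntidiagonal (fun d e => vonMangoldt d), vonMangoldt_sum]

lemma key : (vonMangoldt.pmul ArithmeticFunction.log + vonMangoldt * vonMangoldt) =
    (moebius : ArithmeticFunction ℝ) * ArithmeticFunction.log.pmul ArithmeticFunction.log := by
  calc vonMangoldt.pmul ArithmeticFunction.log + vonMangoldt * vonMangoldt
      = (vonMangoldt.pmul ArithmeticFunction.log + vonMangoldt * vonMangoldt) *
        ((ζ : ArithmeticFunction ℝ) * (moebius : ArithmeticFunction ℝ)) := by
        rw [coe_zeta_mul_coe_moebius, mul_one]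
    _ = ((vonMangoldt.pmul ArithmeticFunction.log + vonMangoldt * vonMangoldt) *
        (ζ : ArithmeticFunction ℝ)) * (moebius : ArithmeticFunction ℝ) := by rw [mul_assoc]
    _ = ArithmeticFunction.log.pmul ArithmeticFunction.log * (moebius : ArithmeticFunction ℝ) := by
        rw [key_conv]
    _ = _ := mul_comm _ _

theorem Lambda2_eq_vonMangoldt_mul_log_add_conv (u : ℕ) (hu : 0 < u) :
    Lambda2 u = vonMangoldt u * Real.log u +
      ∑ p ∈ u.divisorsAntidiagonal, vonMangoldt p.1 * vonMangoldt p.2 := by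
  have h := congrArg (· u) key
  simp only [ArithmeticFunction.add_apply, mul_apply, pmul_apply, log_apply, intCoe_apply] at h
  rw [Lambda2, ← Nat.sum_divisorsAntidiagonal (fun d e => (moebius d : ℝ) * (Real.log e) ^ 2)]
  simp_rw [pow_two]
  rw [h]
end

section
/- The generalized von Mangoldt function Λ_k = μ * log^k vanishes on integers with more than k distinct prime factors. -/
open ArithmeticFunction

lemma alt_sum_poly (P : Finset ℕ) (x : ℕ → ℝ) (p : Polynomial ℝ)
    (hp : p.degree < (P.card : ℕ)) :
    ∑ S ∈ P.powerset, (-1 : ℝ) ^ S.card * p.eval (∑ i ∈ S, x i) = 0 := by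
  open Polynomial in
  induction P using Finset.induction generalizing p with
  | empty =>
      have hp0 : p = 0 := by
        rw [← Polynomial.degree_eq_bot]
        exact Nat.WithBot.lt_zero_iff.mp (by simpa using hp)
      simp [hp0]
  | @insert a P ha ih =>
      by_cases hp0 : p = 0
      · simp [hp0]
      set c := x a with hc
      set r : Polynomial ℝ := X + C c with hr
      have hr1 : r.natDegree = 1 := Polynomial.natDegree_X_add_C c
      have hrm : r.Monic := Polynomial.monic_X_add_C c
      have hlc : (p.comp r).leadingCoeff = p.leadingCoeff := by
        rw [Polynomial.leadingCoeff_comp (by rw [hr1]; norm_num), hrm.leadingCoeff, one_pow,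
          mul_one]
      have hcomp0 : p.comp r ≠ 0 := by
        intro hz
        apply hp0
        rw [← Polynomial.leadingCoeff_eq_zero, ← hlc, hz, Polynomial.leadingCoeff_zero]
      have hnd : (p.comp r).natDegree = p.natDegree := by
        rw [Polynomial.natDegree_comp, hr1, mul_one]
      have hdeg : p.degree = (p.comp r).degree := by
        rw [Polynomial.degree_eq_natDegree hp0, Polynomial.degree_eq_natDegree hcomp0, hnd]
      set q : Polynomial ℝ := p - p.comp r with hq
      have hqlt : q.degree < p.degree := Polynomial.degree_sub_lt hdeg hp0 hlc.symm
      have hple : p.degree ≤ (P.card : ℕ) := by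
        rw [Polynomial.degree_eq_natDegree hp0, Nat.cast_le]
        have := hp
        rw [Polynomial.degree_eq_natDegree hp0, Finset.card_insert_of_notMem ha,
          Nat.cast_lt] at this
        omega
      have hqdeg : q.degree < (P.card : ℕ) := lt_of_lt_of_le hqlt hple
      have key := ih q hqdeg
      rw [Finset.powerset_insert, Finset.sum_union]
      · have himg : ∑ S ∈ (P.powerset.image (insert a)),
            (-1 : ℝ) ^ S.card * p.eval (∑ i ∈ S, x i)
            = ∑ S ∈ P.powerset, (-1 : ℝ) ^ (S.card + 1) * p.eval (c + ∑ i ∈ S, x i) := by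
          rw [Finset.sum_image]
          · refine Finset.sum_congr rfl fun S hS => ?_
            rw [Finset.mem_powerset] at hS
            have haS : a ∉ S := fun h => ha (hS h)
            rw [Finset.card_insert_of_notMem haS, Finset.sum_insert haS]
          · intro S hS T hT hST
            rw [Finset.mem_coe, Finset.mem_powerset] at hS hT
            have haS : a ∉ S := fun h => ha (hS h)
            have haT : a ∉ T := fun h => ha (hT h)
            rw [← Finset.erase_insert haS, ← Finset.erase_insert haT, hST]
        rw [himg, ← key]
        rw [← Finset.sum_add_distrib]
        refine Finset.sum_congr rfl fun S hS => ?_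
        have hev : (p.comp r).eval (∑ i ∈ S, x i) = p.eval (c + ∑ i ∈ S, x i) := by
          rw [Polynomial.eval_comp, hr]
          simp [add_comm]
        rw [hq, Polynomial.eval_sub, hev, pow_succ]
        ring
      · rw [Finset.disjoint_right]
        intro S hS hS'
        rw [Finset.mem_image] at hS
        obtain ⟨T, hT, rfl⟩ := hS
        rw [Finset.mem_powerset] at hS'
        exact ha (hS' (Finset.mem_insert_self a T))

/-- The generalized von Mangoldt function `Λ_k = μ * log^k`. -/
noncomputable def LambdaK (k n : ℕ) : ℝ :=
  ∑ d ∈ n.divisors, (moebius d : ℝ) * (Real.log ((n / d : ℕ) : ℝ)) ^ k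

theorem LambdaK_eq_zero_of_lt_card_primeFactors (k n : ℕ) (hk : 1 ≤ k) (hn : 0 < n)
    (h : k < n.primeFactors.card) : LambdaK k n = 0 := by
  open Polynomial in
  have hn0 : n ≠ 0 := hn.ne'
  rw [LambdaK]
  rw [← Finset.sum_filter_of_ne (p := Squarefree)
    (fun d _ hne => by
      by_contra hsf
      exact hne (by rw [ArithmeticFunction.moebius_eq_zero_of_not_squarefree hsf]; simp))]
  rw [Nat.sum_divisors_filter_squarefree hn0]
  have hPF : (UniqueFactorizationMonoid.normalizedFactors n).toFinset = n.primeFactors := by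
    rw [Nat.factors_eq]
    simp [Nat.toFinset_factors]
  rw [hPF]
  have key := alt_sum_poly n.primeFactors (fun p => Real.log p)
    ((C (Real.log n) - X) ^ k) ?deg
  case deg =>
    rw [Polynomial.degree_pow]
    have h1 : (C (Real.log n) - X : Polynomial ℝ).degree = 1 := by
      rw [← Polynomial.degree_neg, neg_sub, Polynomial.degree_X_sub_C]
    rw [h1]
    simpa using (Nat.cast_lt (α := WithBot ℕ)).mpr h
  rw [← key]
  refine Finset.sum_congr rfl fun S hS => ?_
  rw [Finset.mem_powerset] at hS
  have hprime : ∀ p ∈ S, p.Prime := fun p hp => Nat.prime_of_mem_primeFactors (hS hp)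
  have hdprod : S.val.prod = ∏ p ∈ S, p := S.prod_val.trans (by simp)
  have hd0 : (∏ p ∈ S, p) ≠ 0 :=
    Finset.prod_ne_zero_iff.mpr fun p hp => (hprime p hp).ne_zero
  have hdvd : (∏ p ∈ S, p) ∣ n :=
    (Finset.prod_dvd_prod_of_subset _ _ _ hS).trans n.prod_primeFactors_dvd
  have hmu : (moebius (∏ p ∈ S, p) : ℝ) = (-1 : ℝ) ^ S.card := by
    rw [ArithmeticFunction.isMultiplicative_moebius.map_prod_of_subset_primeFactors n S hS]
    push_cast
    rw [Finset.prod_congr rfl fun p hp => by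
      rw [ArithmeticFunction.moebius_apply_prime (hprime p hp)]]
    push_cast
    simp
  have hlog : Real.log ((n / ∏ p ∈ S, p : ℕ) : ℝ)
      = Real.log n - ∑ p ∈ S, Real.log p := by
    rw [Nat.cast_div hdvd (by exact_mod_cast hd0), Real.log_div (by exact_mod_cast hn0)
      (by exact_mod_cast hd0), Nat.cast_prod,
      Real.log_prod fun p hp => by exact_mod_cast (hprime p hp).ne_zero]
  rw [hdprod, hmu, hlog]
  simp
end

section
/- Let f₁, f₂ be arithmetic functions, k a positive integer, and D a positive integer. Then for any X ≥ 1, Σ_{m ≤ X, (m,k)=1} (f₁*f₂)(mD) = Σ_{d₁d₂=D} Σ_{m₁m₂ ≤ X, (m₁, k d₁)=1, (m₂,k)=1} f₁(m₁d₂) f₂(m₂d₁), where * denotes Dirichlet convolution. -/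
lemma conv_aux (D m a b : ℕ) (hD0 : D ≠ 0) (hab : a * b = m * D) :
    (D / Nat.gcd a D) * Nat.gcd a D = D ∧
    Nat.Coprime (a / Nat.gcd a D) (D / Nat.gcd a D) ∧
    (a / Nat.gcd a D) * Nat.gcd a D = a ∧
    (D / Nat.gcd a D) ∣ b ∧
    (a / Nat.gcd a D) * (b / (D / Nat.gcd a D)) = m := by
  set g := Nat.gcd a D with hgdef
  have hg0 : g ≠ 0 := Nat.gcd_ne_zero_right hD0
  have hga : g ∣ a := Nat.gcd_dvd_left a D
  have hgD : g ∣ D := Nat.gcd_dvd_right a D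
  have hd1d2 : (D / g) * g = D := Nat.div_mul_cancel hgD
  have hcop : Nat.Coprime (a / g) (D / g) :=
    Nat.coprime_div_gcd_div_gcd (Nat.pos_of_ne_zero hg0)
  have key : (a / g) * b = m * (D / g) := by
    apply Nat.eq_of_mul_eq_mul_right (Nat.pos_of_ne_zero hg0)
    calc a / g * b * g = a / g * g * b := by ring
      _ = a * b := by rw [Nat.div_mul_cancel hga]
      _ = m * D := hab
      _ = m * (D / g * g) := by rw [hd1d2]
      _ = m * (D / g) * g := by ring
  have hd1b : (D / g) ∣ b := by
    have : (D / g) ∣ (a / g) * b := ⟨m, by rw [key]; ring⟩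
    exact Nat.Coprime.dvd_of_dvd_mul_left hcop.symm this
  have hd1_0 : D / g ≠ 0 := by
    rintro h; rw [h, zero_mul] at hd1d2; exact hD0 hd1d2.symm
  have hm1m2 : (a / g) * (b / (D / g)) = m := by
    apply Nat.eq_of_mul_eq_mul_right (Nat.pos_of_ne_zero hd1_0)
    rw [mul_assoc, Nat.div_mul_cancel hd1b, key]
  exact ⟨hd1d2, hcop, Nat.div_mul_cancel hga, hd1b, hm1m2⟩

theorem conv_decomposition (f₁ f₂ : ℕ → ℝ) (k D : ℕ) (hk : 0 < k) (hD : 0 < D)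
    (X : ℝ) (hX : 1 ≤ X) :
    ∑ m ∈ (Finset.Icc 1 ⌊X⌋₊).filter (fun m => Nat.gcd m k = 1),
      ∑ p ∈ (m * D).divisorsAntidiagonal, f₁ p.1 * f₂ p.2
    = ∑ d ∈ D.divisorsAntidiagonal,
        ∑ p ∈ ((Finset.Icc 1 ⌊X⌋₊ ×ˢ Finset.Icc 1 ⌊X⌋₊).filter
            (fun p => p.1 * p.2 ≤ ⌊X⌋₊ ∧ Nat.gcd p.1 (k * d.1) = 1 ∧ Nat.gcd p.2 k = 1)),
          f₁ (p.1 * d.2) * f₂ (p.2 * d.1) := by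
  have hD0 : D ≠ 0 := hD.ne'
  rw [Finset.sum_sigma', Finset.sum_sigma']
  refine Finset.sum_nbij'
    (i := fun x => ⟨(D / Nat.gcd x.2.1 D, Nat.gcd x.2.1 D),
      (x.2.1 / Nat.gcd x.2.1 D, x.2.2 / (D / Nat.gcd x.2.1 D))⟩)
    (j := fun y => ⟨y.2.1 * y.2.2, (y.2.1 * y.1.2, y.2.2 * y.1.1)⟩)
    ?_ ?_ ?_ ?_ ?_
  · rintro ⟨m, a, b⟩ hx
    simp only [Finset.mem_sigma, Finset.mem_filter, Finset.mem_Icc, Finset.mem_product,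
      Nat.mem_divisorsAntidiagonal] at hx ⊢
    obtain ⟨⟨⟨hm1, hmX⟩, hmk⟩, hab, hmD0⟩ := hx
    obtain ⟨hd1d2, hcop, hag, hd1b, hm1m2⟩ := conv_aux D m a b hD0 hab
    set g := Nat.gcd a D
    have ha1 : 1 ≤ a / g := Nat.one_le_iff_ne_zero.2 (by
      intro h; rw [h, zero_mul] at hm1m2; omega)
    have hb1 : 1 ≤ b / (D / g) := Nat.one_le_iff_ne_zero.2 (by
      intro h; rw [h, mul_zero] at hm1m2; omega)
    have hm1dvd : (a / g) ∣ m := ⟨b / (D / g), hm1m2.symm⟩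
    have hm2dvd : (b / (D / g)) ∣ m := ⟨a / g, by rw [← hm1m2]; ring⟩
    refine ⟨⟨hd1d2, hD0⟩, ⟨⟨ha1, ?_⟩, ⟨hb1, ?_⟩⟩, ?_, ?_, ?_⟩
    · exact le_trans (Nat.le_of_dvd (by omega) hm1dvd) hmX
    · exact le_trans (Nat.le_of_dvd (by omega) hm2dvd) hmX
    · rw [hm1m2]; exact hmX
    · exact Nat.Coprime.mul_right (Nat.Coprime.coprime_dvd_left hm1dvd hmk) hcop
    · exact Nat.Coprime.coprime_dvd_left hm2dvd hmk
  · rintro ⟨⟨d₁, d₂⟩, m₁, m₂⟩ hy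
    simp only [Finset.mem_sigma, Finset.mem_filter, Finset.mem_Icc, Finset.mem_product,
      Nat.mem_divisorsAntidiagonal] at hy ⊢
    obtain ⟨⟨hd, _⟩, ⟨⟨hm11, _⟩, hm21, _⟩, hle, h1, h2⟩ := hy
    have hm1k : Nat.Coprime m₁ k := Nat.Coprime.coprime_dvd_right ⟨d₁, rfl⟩ h1
    refine ⟨⟨⟨?_, hle⟩, Nat.Coprime.mul hm1k h2⟩, by rw [← hd]; ring, ?_⟩
    · exact Nat.one_le_iff_ne_zero.2 (by positivity)
    · simp only [Nat.mul_ne_zero_iff]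
      omega
  · rintro ⟨m, a, b⟩ hx
    simp only [Finset.mem_sigma, Finset.mem_filter, Finset.mem_Icc,
      Nat.mem_divisorsAntidiagonal] at hx
    obtain ⟨⟨⟨hm1, hmX⟩, hmk⟩, hab, hmD0⟩ := hx
    obtain ⟨hd1d2, hcop, hag, hd1b, hm1m2⟩ := conv_aux D m a b hD0 hab
    simp only [Sigma.mk.inj_iff, heq_eq_eq, Prod.mk.injEq]
    exact ⟨hm1m2, hag, Nat.div_mul_cancel hd1b⟩
  · rintro ⟨⟨d₁, d₂⟩, m₁, m₂⟩ hy
    simp only [Finset.mem_sigma, Finset.mem_filter, Finset.mem_Icc, Finset.mem_product,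
      Nat.mem_divisorsAntidiagonal] at hy
    obtain ⟨⟨hd, _⟩, ⟨⟨hm11, _⟩, hm21, _⟩, hle, h1, h2⟩ := hy
    have hm1d1 : Nat.Coprime m₁ d₁ := Nat.Coprime.coprime_dvd_right ⟨k, mul_comm k d₁⟩ h1
    have hd20 : d₂ ≠ 0 := by rintro rfl; rw [mul_zero] at hd; exact hD0 hd.symm
    have hd10 : d₁ ≠ 0 := by rintro rfl; rw [zero_mul] at hd; exact hD0 hd.symm
    have hgcd : Nat.gcd (m₁ * d₂) D = d₂ := by
      rw [← hd, mul_comm m₁ d₂, mul_comm d₁ d₂, Nat.gcd_mul_left, hm1d1, mul_one]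
    simp only [Sigma.mk.inj_iff, heq_eq_eq, Prod.mk.injEq, hgcd]
    refine ⟨⟨?_, trivial⟩, ?_, ?_⟩
    · rw [← hd, Nat.mul_div_cancel _ (Nat.pos_of_ne_zero hd20)]
    · exact Nat.mul_div_cancel _ (Nat.pos_of_ne_zero hd20)
    · rw [← hd, Nat.mul_div_cancel _ (Nat.pos_of_ne_zero hd20),
        Nat.mul_div_cancel _ (Nat.pos_of_ne_zero hd10)]
  · rintro ⟨m, a, b⟩ hx
    simp only [Finset.mem_sigma, Finset.mem_filter, Finset.mem_Icc,
      Nat.mem_divisorsAntidiagonal] at hx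
    obtain ⟨⟨⟨hm1, hmX⟩, hmk⟩, hab, hmD0⟩ := hx
    obtain ⟨hd1d2, hcop, hag, hd1b, hm1m2⟩ := conv_aux D m a b hD0 hab
    simp only
    rw [hag, Nat.div_mul_cancel hd1b]
end

section
/- If χ is a Dirichlet character modulo k′ induced by the primitive character ψ modulo q (so q | k′), then the Gauss sums satisfy τ(χ) = μ(k′/q) · ψ(k′/q) · τ(ψ). -/
open Complex

/-- `e(x) = exp(2πix)`. -/
noncomputable def eadd (x : ℝ) : ℂ := Complex.exp (2 * Real.pi * Complex.I * x)

/-- The Gauss sum `τ(χ) = Σ_{a=1}^{n} χ(a) e(a/n)` of a Dirichlet character mod `n`. -/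
noncomputable def gaussSum' {n : ℕ} (χ : DirichletCharacter ℂ n) : ℂ :=
  ∑ a ∈ Finset.range n, χ (a : ZMod n) * eadd ((a : ℝ) / n)

lemma eadd_add (x y : ℝ) : eadd (x + y) = eadd x * eadd y := by
  unfold eadd
  rw [← Complex.exp_add]
  push_cast
  ring_nf

lemma moebius_divisor_sum (n : ℕ) :
    ∑ t ∈ n.divisors, ArithmeticFunction.moebius t = if n = 1 then 1 else 0 := by
  rw [← ArithmeticFunction.coe_mul_zeta_apply, ArithmeticFunction.moebius_mul_coe_zeta,
    ArithmeticFunction.one_apply]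

lemma sum_eadd_range (s : ℕ) (hs : s ≠ 0) :
    ∑ j ∈ Finset.range s, eadd ((j : ℝ) / s) = if s = 1 then 1 else 0 := by
  have hx : ∀ j : ℕ, eadd ((j:ℝ)/s) = (Complex.exp (2*Real.pi*Complex.I / s)) ^ j := by
    intro j
    rw [← Complex.exp_nat_mul]
    unfold eadd
    congr 1
    push_cast
    ring
  rcases eq_or_ne s 1 with rfl | h1
  · simp [eadd]
  · rw [if_neg h1]
    have hroot := Complex.isPrimitiveRoot_exp s hs
    have hne : Complex.exp (2*Real.pi*Complex.I / s) ≠ 1 := hroot.ne_one (by omega)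
    simp_rw [hx]
    rw [geom_sum_eq hne, hroot.pow_eq_one, sub_self, zero_div]

lemma sum_range_mul' (f : ℕ → ℂ) (q s : ℕ) :
    ∑ b ∈ Finset.range (q * s), f b
      = ∑ j ∈ Finset.range s, ∑ c ∈ Finset.range q, f (j * q + c) := by
  induction s with
  | zero => simp
  | succ n ih =>
      rw [Nat.mul_succ, Finset.sum_range_add, ih, Finset.sum_range_succ]
      congr 1
      refine Finset.sum_congr rfl fun c _ => ?_
      rw [Nat.mul_comm]

lemma sum_multiples (f : ℕ → ℂ) {t : ℕ} (ht : 0 < t) (m : ℕ) :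
    ∑ a ∈ (Finset.range (t*m)).filter (fun a => t ∣ a), f a
      = ∑ b ∈ Finset.range m, f (t * b) := by
  have himg : (Finset.range (t*m)).filter (fun a => t ∣ a)
      = (Finset.range m).image (fun b => t*b) := by
    ext a
    simp only [Finset.mem_filter, Finset.mem_range, Finset.mem_image]
    constructor
    · rintro ⟨ha, b, rfl⟩
      exact ⟨b, by exact lt_of_mul_lt_mul_left ha (Nat.zero_le t), rfl⟩
    · rintro ⟨b, hb, rfl⟩
      exact ⟨Nat.mul_lt_mul_of_pos_left hb ht, ⟨b, rfl⟩⟩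
  rw [himg, Finset.sum_image (fun x _ y _ hxy => Nat.eq_of_mul_eq_mul_left ht hxy)]

lemma moebius_indicator {d : ℕ} (hd : d ≠ 0) (a : ℕ) :
    (if Nat.Coprime a d then (1:ℂ) else 0) =
      ∑ t ∈ d.divisors, (if t ∣ a then ((ArithmeticFunction.moebius t : ℤ) : ℂ) else 0) := by
  have h1 : (d.divisors.filter (fun t => t ∣ a)) = (Nat.gcd a d).divisors := by
    rw [← Nat.divisors_filter_dvd_of_dvd hd (Nat.gcd_dvd_right a d)]
    ext t
    simp only [Finset.mem_filter, Nat.mem_divisors]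
    constructor
    · rintro ⟨⟨htd, _⟩, hta⟩; exact ⟨⟨htd, hd⟩, Nat.dvd_gcd hta htd⟩
    · rintro ⟨⟨htd, _⟩, htg⟩; exact ⟨⟨htd, hd⟩, htg.trans (Nat.gcd_dvd_left a d)⟩
  calc (if Nat.Coprime a d then (1:ℂ) else 0)
      = (((if Nat.gcd a d = 1 then 1 else 0 : ℤ)) : ℂ) := by
        simp [Nat.Coprime, apply_ite (fun z : ℤ => (z : ℂ))]
    _ = ((∑ t ∈ (Nat.gcd a d).divisors, ArithmeticFunction.moebius t : ℤ) : ℂ) := by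
        rw [moebius_divisor_sum]
    _ = ∑ t ∈ (Nat.gcd a d).divisors, ((ArithmeticFunction.moebius t : ℤ) : ℂ) := by
        push_cast; rfl
    _ = ∑ t ∈ d.divisors.filter (fun t => t ∣ a),
          ((ArithmeticFunction.moebius t : ℤ) : ℂ) := by rw [h1]
    _ = _ := Finset.sum_filter _ _

lemma changeLevel_nat_apply {q k : ℕ} [NeZero q] [NeZero k] (h : q ∣ k)
    (ψ : DirichletCharacter ℂ q) {d : ℕ} (hd : k = q * d) (a : ℕ) :
    (DirichletCharacter.changeLevel h ψ) (a : ZMod k) =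
      (if Nat.Coprime a d then 1 else 0) * ψ ((a : ZMod q)) := by
  by_cases hu : IsUnit ((a : ZMod k))
  · obtain ⟨u, hu'⟩ := hu
    have hcop : Nat.Coprime a k := (ZMod.isUnit_iff_coprime a k).mp (hu' ▸ u.isUnit)
    rw [← hu', DirichletCharacter.changeLevel_eq_cast_of_dvd ψ h u, hu']
    rw [if_pos (Nat.Coprime.coprime_dvd_right ⟨q, by rw [hd, mul_comm]⟩ hcop), one_mul]
    rw [ZMod.cast_natCast h a]
  · rw [MulChar.map_nonunit _ hu]
    have hnc : ¬ Nat.Coprime a k := fun hc => hu ((ZMod.isUnit_iff_coprime a k).mpr hc)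
    by_cases hcd : Nat.Coprime a d
    · have hq : ¬ Nat.Coprime a q := fun hq => hnc (by rw [hd]; exact Nat.Coprime.mul_right hq hcd)
      rw [MulChar.map_nonunit ψ (fun hu' => hq ((ZMod.isUnit_iff_coprime a q).mp hu')), mul_zero]
    · rw [if_neg hcd, zero_mul]

lemma inner_sum_eval {q : ℕ} [NeZero q] (ψ : DirichletCharacter ℂ q) (s : ℕ) (hs : s ≠ 0) :
    ∑ b ∈ Finset.range (q * s), ψ (b : ZMod q) * eadd ((b:ℝ) / ((q:ℝ) * (s:ℝ))) =
      (if s = 1 then 1 else 0) * gaussSum' ψ := by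
  have hq : (q:ℝ) ≠ 0 := Nat.cast_ne_zero.mpr (NeZero.ne q)
  have hsr : (s:ℝ) ≠ 0 := Nat.cast_ne_zero.mpr hs
  rw [sum_range_mul']
  have hterm : ∀ j c : ℕ, ψ ((j*q+c : ℕ) : ZMod q) * eadd (((j*q+c : ℕ):ℝ) / ((q:ℝ)*(s:ℝ)))
      = eadd ((j:ℝ)/s) * (ψ (c : ZMod q) * eadd ((c:ℝ) / ((q:ℝ)*(s:ℝ)))) := by
    intro j c
    have h1 : ((j*q+c : ℕ) : ZMod q) = (c : ZMod q) := by
      push_cast [ZMod.natCast_self]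
      ring
    have h2 : (((j*q+c : ℕ):ℝ) / ((q:ℝ)*(s:ℝ))) = (j:ℝ)/s + (c:ℝ)/((q:ℝ)*(s:ℝ)) := by
      push_cast
      field_simp
    rw [h1, h2, eadd_add]
    ring
  simp_rw [hterm]
  rw [← Finset.sum_mul_sum, sum_eadd_range s hs]
  rcases eq_or_ne s 1 with rfl | h1
  · unfold gaussSum'
    norm_num
  · rw [if_neg h1, zero_mul, zero_mul]

lemma inner_sum_aux {q k d : ℕ} [NeZero q] (hk : k = q * d) (hd0 : d ≠ 0)
    (ψ : DirichletCharacter ℂ q) (C : ℂ) {t : ℕ} (ht : t ∈ d.divisors) :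
    ∑ a ∈ Finset.range k, (if t ∣ a then C else 0) * (ψ ((a : ZMod q)) * eadd ((a:ℝ)/(k:ℝ)))
      = C * (ψ ((t : ZMod q)) * ((if d/t = 1 then 1 else 0) * gaussSum' ψ)) := by
  obtain ⟨htd, -⟩ := Nat.mem_divisors.mp ht
  have ht0 : 0 < t := Nat.pos_of_dvd_of_pos htd (Nat.pos_of_ne_zero hd0)
  set s := d / t with hs_def
  have hds : d = t * s := (Nat.mul_div_cancel' htd).symm
  have hs0 : s ≠ 0 := by
    rintro h0
    rw [h0, mul_zero] at hds
    exact hd0 hds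
  have hk2 : k = t * (q * s) := by rw [hk, hds]; ring
  have hkr : (k:ℝ) = (t:ℝ) * ((q:ℝ) * (s:ℝ)) := by rw [hk2]; push_cast; ring
  have htr : (t:ℝ) ≠ 0 := Nat.cast_ne_zero.mpr ht0.ne'
  have hqr : (q:ℝ) ≠ 0 := Nat.cast_ne_zero.mpr (NeZero.ne q)
  have hsr : (s:ℝ) ≠ 0 := Nat.cast_ne_zero.mpr hs0
  calc ∑ a ∈ Finset.range k, (if t ∣ a then C else 0) * (ψ ((a : ZMod q)) * eadd ((a:ℝ)/(k:ℝ)))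
      = ∑ a ∈ (Finset.range k).filter (fun a => t ∣ a),
          C * (ψ ((a : ZMod q)) * eadd ((a:ℝ)/(k:ℝ))) := by
        rw [Finset.sum_filter]
        refine Finset.sum_congr rfl fun a _ => ?_
        split_ifs <;> simp
    _ = ∑ b ∈ Finset.range (q * s),
          C * (ψ (((t*b : ℕ) : ZMod q)) * eadd (((t*b : ℕ):ℝ)/(k:ℝ))) := by
        rw [hk2, sum_multiples _ ht0]
    _ = ∑ b ∈ Finset.range (q * s),
          C * (ψ ((t : ZMod q)) * (ψ ((b : ZMod q)) * eadd ((b:ℝ)/((q:ℝ)*(s:ℝ))))) := by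
        refine Finset.sum_congr rfl fun b _ => ?_
        have h1 : ((t*b : ℕ) : ZMod q) = (t : ZMod q) * (b : ZMod q) := by push_cast; ring
        have h2 : ((t*b : ℕ):ℝ)/(k:ℝ) = (b:ℝ)/((q:ℝ)*(s:ℝ)) := by
          rw [hkr]
          push_cast
          field_simp
        rw [h1, h2, map_mul]
        ring
    _ = C * (ψ ((t : ZMod q)) *
          ∑ b ∈ Finset.range (q * s), ψ ((b : ZMod q)) * eadd ((b:ℝ)/((q:ℝ)*(s:ℝ)))) := by
        simp only [Finset.mul_sum]
    _ = C * (ψ ((t : ZMod q)) * ((if s = 1 then 1 else 0) * gaussSum' ψ)) := by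
        rw [inner_sum_eval ψ s hs0]

theorem gaussSum_induced (q k : ℕ) [NeZero q] [NeZero k] (h : q ∣ k)
    (ψ : DirichletCharacter ℂ q) (hψ : ψ.IsPrimitive) :
    gaussSum' (DirichletCharacter.changeLevel h ψ) =
      (ArithmeticFunction.moebius (k / q) : ℂ) * ψ ((k / q : ℕ) : ZMod q) * gaussSum' ψ := by
  set d := k / q with hd_def
  have hk : k = q * d := (Nat.mul_div_cancel' h).symm
  have hd0 : d ≠ 0 := by
    rintro h0
    rw [h0, mul_zero] at hk
    exact (NeZero.ne k) hk
  calc gaussSum' (DirichletCharacter.changeLevel h ψ)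
      = ∑ a ∈ Finset.range k, ∑ t ∈ d.divisors,
          (if t ∣ a then ((ArithmeticFunction.moebius t : ℤ):ℂ) else 0)
            * (ψ ((a : ZMod q)) * eadd ((a:ℝ)/(k:ℝ))) := by
        unfold gaussSum'
        refine Finset.sum_congr rfl fun a _ => ?_
        rw [changeLevel_nat_apply h ψ hk a, mul_assoc, moebius_indicator hd0 a,
          Finset.sum_mul]
    _ = ∑ t ∈ d.divisors, ∑ a ∈ Finset.range k,
          (if t ∣ a then ((ArithmeticFunction.moebius t : ℤ):ℂ) else 0)
            * (ψ ((a : ZMod q)) * eadd ((a:ℝ)/(k:ℝ))) := by rw [Finset.sum_comm]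
    _ = ∑ t ∈ d.divisors, ((ArithmeticFunction.moebius t : ℤ):ℂ)
            * (ψ ((t : ZMod q)) * ((if d/t = 1 then 1 else 0) * gaussSum' ψ)) := by
        refine Finset.sum_congr rfl fun t ht => ?_
        exact inner_sum_aux hk hd0 ψ _ ht
    _ = (ArithmeticFunction.moebius d : ℂ) * ψ ((d : ℕ) : ZMod q) * gaussSum' ψ := by
        rw [Finset.sum_eq_single_of_mem d (Nat.mem_divisors_self d hd0)]
        · rw [Nat.div_self (Nat.pos_of_ne_zero hd0), if_pos rfl]
          push_cast
          ring
        · intro t ht htne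
          obtain ⟨htd, -⟩ := Nat.mem_divisors.mp ht
          have : d / t ≠ 1 := by
            intro h1
            apply htne
            have := Nat.mul_div_cancel' htd
            rw [h1, mul_one] at this
            exact this
          rw [if_neg this]
          simp
end

section
/- For a prime p, real s with Re(s) > 1, Σ_{k ≥ 1, gcd(k,p)=1} μ(k) log(k) / k^s = (1 − p^{−s})^{−2} · (log p)/p^s · ζ(s)^{−1} + (1 − p^{−s})^{−1} · ζ′(s)/ζ(s)². -/
open ArithmeticFunction LSeries Complex

noncomputable def mfP (p : ℕ) : ℕ → ℂ := fun k => if Nat.gcd k p = 1 then (moebius k : ℂ) else 0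

lemma mfP_norm_le (p k : ℕ) : ‖mfP p k‖ ≤ 1 := by
  unfold mfP
  split
  · rw [norm_intCast]; exact_mod_cast abs_moebius_le_one (n := k)
  · simp

lemma mfP_summable (p : ℕ) {z : ℂ} (hz : 1 < z.re) : LSeriesSummable (mfP p) z :=
  LSeriesSummable_of_bounded_of_one_lt_re (m := 1) (fun n _ => mfP_norm_le p n) hz

lemma mfP_abscissa (p : ℕ) : abscissaOfAbsConv (mfP p) ≤ 1 :=
  abscissaOfAbsConv_le_of_le_const ⟨1, fun n _ => mfP_norm_le p n⟩

-- g part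
noncomputable def mgP (p : ℕ) : ℕ → ℂ := fun k => if Nat.gcd k p = 1 then 0 else (moebius k : ℂ)

lemma mgP_summable (p : ℕ) {z : ℂ} (hz : 1 < z.re) : LSeriesSummable (mgP p) z := by
  refine LSeriesSummable_of_bounded_of_one_lt_re (m := 1) (fun n _ => ?_) hz
  unfold mgP
  split
  · simp
  · rw [norm_intCast]; exact_mod_cast abs_moebius_le_one (n := n)

lemma mgP_apply_mul (p : ℕ) (hp : p.Prime) (m : ℕ) : mgP p (p * m) = -(mfP p m) := by
  unfold mgP mfP
  have hgcd : Nat.gcd (p * m) p ≠ 1 := by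
    have : p ∣ Nat.gcd (p * m) p := Nat.dvd_gcd ⟨m, rfl⟩ dvd_rfl
    intro h; rw [h] at this; exact hp.one_lt.ne' (Nat.eq_one_of_dvd_one this)
  rw [if_neg hgcd]
  by_cases hm : Nat.gcd m p = 1
  · rw [if_pos hm]
    have hcop : Nat.Coprime p m := (Nat.coprime_comm.mpr hm)
    rw [isMultiplicative_moebius.map_mul_of_coprime hcop, moebius_apply_prime hp]
    push_cast; ring
  · rw [if_neg hm]
    have hpm : p ∣ m := by
      by_contra hdvd
      exact hm (Nat.Coprime.gcd_eq_one ((hp.coprime_iff_not_dvd.mpr hdvd).symm))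
    have hnsq : ¬ Squarefree (p * m) := by
      intro hsq
      obtain ⟨c, rfl⟩ := hpm
      have := hsq p ⟨c, by ring⟩
      exact hp.one_lt.ne' (Nat.isUnit_iff.mp this)
    rw [moebius_eq_zero_of_not_squarefree hnsq]
    push_cast; ring

lemma term_mgP_mul (p : ℕ) (hp : p.Prime) (z : ℂ) (m : ℕ) :
    term (mgP p) z (p * m) = -((p:ℂ) ^ (-z)) * term (mfP p) z m := by
  rcases eq_or_ne m 0 with rfl | hm
  · simp [term_zero]
  · have hpm : p * m ≠ 0 := Nat.mul_ne_zero hp.pos.ne' hm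
    rw [term_of_ne_zero hpm, term_of_ne_zero hm, mgP_apply_mul p hp m,
      Nat.cast_mul, natCast_mul_natCast_cpow, cpow_neg]
    have hpz : ((p:ℂ)) ^ z ≠ 0 := by
      simp [cpow_eq_zero_iff, hp.pos.ne']
    field_simp

lemma LSeries_mgP (p : ℕ) (hp : p.Prime) {z : ℂ} (hz : 1 < z.re) :
    LSeries (mgP p) z = -((p:ℂ) ^ (-z)) * LSeries (mfP p) z := by
  unfold LSeries
  have hinj : Function.Injective (fun m => p * m) :=
    fun a b hab => by simpa [hp.pos.ne'] using hab
  have hsupp : Function.support (term (mgP p) z) ⊆ Set.range (fun m => p * m) := by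
    intro n hn
    by_contra hnr
    have hnd : ¬ p ∣ n := by
      rintro ⟨c, rfl⟩; exact hnr ⟨c, rfl⟩
    have hgcd : Nat.gcd n p = 1 :=
      Nat.Coprime.gcd_eq_one ((hp.coprime_iff_not_dvd.mpr hnd).symm)
    apply hn
    rcases eq_or_ne n 0 with rfl | hn0
    · simp [term_zero]
    · rw [term_of_ne_zero hn0]
      simp [mgP, hgcd]
  rw [← hinj.tsum_eq hsupp]
  simp_rw [term_mgP_mul p hp z]
  rw [tsum_mul_left]

lemma LSeries_mfP (p : ℕ) (hp : p.Prime) {z : ℂ} (hz : 1 < z.re) :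
    LSeries (mfP p) z = (riemannZeta z)⁻¹ * (1 - (p:ℂ) ^ (-z))⁻¹ := by
  have hsplit : LSeries (fun n => ((moebius n : ℤ) : ℂ)) z
      = LSeries (mfP p) z + LSeries (mgP p) z := by
    unfold LSeries
    rw [← Summable.tsum_add ((mfP_summable p hz)) ((mgP_summable p hz))]
    refine tsum_congr fun n => ?_
    rcases eq_or_ne n 0 with rfl | hn0
    · simp [term_zero]
    · rw [term_of_ne_zero hn0, term_of_ne_zero hn0, term_of_ne_zero hn0, ← add_div]
      congr 1
      unfold mfP mgP
      split <;> simp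
  have hmu : riemannZeta z * LSeries (fun n => ((moebius n : ℤ) : ℂ)) z = 1 := by
    have := LSeries_zeta_mul_Lseries_moebius hz
    rwa [LSeries_zeta_eq_riemannZeta hz] at this
  rw [hsplit, LSeries_mgP p hp hz] at hmu
  have hzeta : riemannZeta z ≠ 0 := riemannZeta_ne_zero_of_one_lt_re hz
  have hfac : (1 : ℂ) - (p:ℂ) ^ (-z) ≠ 0 := one_sub_prime_cpow_ne_zero hp hz
  field_simp
  linear_combination hmu

theorem sum_moebius_log_coprime_p (p : ℕ) (hp : p.Prime) (s : ℂ) (hs : 1 < s.re) :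
    ∑' k : ℕ, (if Nat.gcd k p = 1 then
        (ArithmeticFunction.moebius k : ℂ) * (Real.log k : ℂ) / (k : ℂ) ^ s else 0)
      = ((1 - (p : ℂ) ^ (-s))⁻¹) ^ 2 * ((Real.log p : ℂ) / (p : ℂ) ^ s) *
          (riemannZeta s)⁻¹
        + (1 - (p : ℂ) ^ (-s))⁻¹ * deriv riemannZeta s / (riemannZeta s) ^ 2 := by
  have hs1 : s ≠ 1 := fun h => by rw [h] at hs; simp at hs
  have hzeta : riemannZeta s ≠ 0 := riemannZeta_ne_zero_of_one_lt_re hs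
  have hfac : (1 : ℂ) - (p:ℂ) ^ (-s) ≠ 0 := one_sub_prime_cpow_ne_zero hp hs
  have hp0 : (p : ℂ) ≠ 0 := Nat.cast_ne_zero.mpr hp.pos.ne'
  have habs : abscissaOfAbsConv (mfP p) < s.re :=
    lt_of_le_of_lt (mfP_abscissa p) (by exact_mod_cast hs)
  -- the tsum is the L-series of logMul (mfP p)
  have hLHS : ∑' k : ℕ, (if Nat.gcd k p = 1 then
        (ArithmeticFunction.moebius k : ℂ) * (Real.log k : ℂ) / (k : ℂ) ^ s else 0)
      = LSeries (logMul (mfP p)) s := by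
    refine tsum_congr fun k => ?_
    rcases eq_or_ne k 0 with rfl | hk0
    · rw [term_zero, if_neg (by simpa using hp.one_lt.ne')]
    · rw [term_of_ne_zero hk0]
      unfold logMul mfP
      rw [natCast_log]
      split <;> simp [mul_comm]
  rw [hLHS]
  -- derivative of the L-series
  have hderiv : HasDerivAt (LSeries (mfP p)) (-LSeries (logMul (mfP p)) s) s :=
    LSeries_hasDerivAt habs
  set G : ℂ → ℂ := fun z => (riemannZeta z)⁻¹ * (1 - (p:ℂ) ^ (-z))⁻¹ with hG
  have heq : G =ᶠ[nhds s] LSeries (mfP p) := by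
    have hopen : IsOpen {z : ℂ | 1 < z.re} := isOpen_lt continuous_const Complex.continuous_re
    filter_upwards [hopen.mem_nhds hs] with z hz
    exact (LSeries_mfP p hp hz).symm
  have hderiv' : HasDerivAt G (-LSeries (logMul (mfP p)) s) s :=
    hderiv.congr_of_eventuallyEq heq
  -- explicit derivative of G
  have hz : HasDerivAt riemannZeta (deriv riemannZeta s) s :=
    (differentiableAt_riemannZeta hs1).hasDerivAt
  have hzi : HasDerivAt (fun z => (riemannZeta z)⁻¹)
      (-(deriv riemannZeta s) / (riemannZeta s) ^ 2) s := hz.inv hzeta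
  have hPd : HasDerivAt (fun z : ℂ => (p:ℂ) ^ (-z))
      ((p:ℂ) ^ (-s) * Complex.log p * (-1)) s :=
    HasDerivAt.const_cpow ((hasDerivAt_id s).neg) (Or.inl hp0)
  have h1P : HasDerivAt (fun z : ℂ => 1 - (p:ℂ) ^ (-z))
      (-((p:ℂ) ^ (-s) * Complex.log p * (-1))) s := hPd.const_sub 1
  have hinv2 : HasDerivAt (fun z : ℂ => (1 - (p:ℂ) ^ (-z))⁻¹)
      (-(-((p:ℂ) ^ (-s) * Complex.log p * (-1))) / (1 - (p:ℂ) ^ (-s)) ^ 2) s :=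
    h1P.inv hfac
  have hGd : HasDerivAt G
      ((-(deriv riemannZeta s) / (riemannZeta s) ^ 2) * (1 - (p:ℂ) ^ (-s))⁻¹
        + (riemannZeta s)⁻¹ *
          (-(-((p:ℂ) ^ (-s) * Complex.log p * (-1))) / (1 - (p:ℂ) ^ (-s)) ^ 2)) s :=
    hzi.mul hinv2
  have huniq := hGd.unique hderiv'
  rw [← neg_neg (LSeries (logMul (mfP p)) s), ← huniq]
  have hlog : ((Real.log p : ℝ) : ℂ) = Complex.log p := natCast_log
  have hps : ((p:ℂ)) ^ s ≠ 0 := by simp [cpow_eq_zero_iff, hp.pos.ne']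
  rw [hlog, cpow_neg] at *
  field_simp
  ring
end
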